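/- In the stationary process of the DSS, the expected number of topplings at each site per avalanche equals one: for every site x ∈ {1,…,L} and every t ≥ 1, E[s(x,t)] = 1. -/

import Mathlib

namespace DSS

/-- A state of the DSS on `L` sites: a stable field `z : Fin L → Bool` together with a
finite multiset `w` of waiting particles (particles past site `L` have left the system). -/
structure State (L : ℕ) where
  z : Fin L → Bool
  w : Multiset (Fin L)

variable {L : ℕ}

/-- The multiset holding the right neighbour of `x`; empty if the particle leaves the system. -/
def succSite (L : ℕ) (x : Fin L) : Multiset (Fin L) :=
  if h : x.val + 1 < L then {(⟨x.val + 1, h⟩ : Fin L)} else 0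

/-- Evolution of a waiting particle at `x` when `z x = 1`: the waiting particle moves to
`x+1` and the stable particle at `x` becomes a waiting particle at `x`. -/
def topple (s : State L) (x : Fin L) : State L :=
  ⟨Function.update s.z x false, s.w + succSite L x⟩

/-- Evolution of a waiting particle at `x` when `z x = 0`, settling branch (probability p). -/
def settle (s : State L) (x : Fin L) : State L :=
  ⟨Function.update s.z x true, s.w.erase x⟩

/-- Evolution of a waiting particle at `x` when `z x = 0`, jumping branch (probability q). -/
def jump (s : State L) (x : Fin L) : State L :=
  ⟨s.z, s.w.erase x + succSite L x⟩

/-- `stabilizeAux p q R n s c` is the probability that, evolving one waiting particle at a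
time (the particle being selected by the rule `R`), the process started from `s` reaches
within `n` elementary steps a stable state whose stable field is `c`. -/
noncomputable def stabilizeAux (p q : ℝ) (R : State L → Option (Fin L)) :
    ℕ → State L → (Fin L → Bool) → ℝ
  | 0, s, c => if s.w = 0 ∧ s.z = c then 1 else 0
  | n + 1, s, c =>
    match R s with
    | none => if s.z = c then 1 else 0
    | some x =>
      if s.z x then stabilizeAux p q R n (topple s x) c
      else p * stabilizeAux p q R n (settle s x) c
        + q * stabilizeAux p q R n (jump s x) c

/-- The canonical evolution rule: evolve the leftmost waiting particle. -/
def minRule (s : State L) : Option (Fin L) :=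
  if h : s.w = 0 then none
  else some (s.w.toFinset.min'
    (Finset.nonempty_iff_ne_empty.mpr (by simpa [Multiset.toFinset_eq_empty] using h)))

/-- A termination measure: the stabilization process started from `s` ends after at most
`fuel s` elementary steps, whatever the rule and the randomness. -/
def potential (s : State L) : ℕ :=
  (s.w.map fun x => L + 1 - x.val).sum + ∑ x : Fin L, (if s.z x then L + 1 - x.val else 0)

def fuel (s : State L) : ℕ := 2 * potential s + Multiset.card s.w

/-- Add one waiting particle at site `1` (index `0`). -/
def addGrain (r : Fin L → Bool) : State L :=
  ⟨r, if h : 0 < L then {(⟨0, h⟩ : Fin L)} else 0⟩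

/-- The driven-dissipative transition kernel `W` of the DSS: add a particle at site 1 and
stabilize. -/
noncomputable def Wker (p q : ℝ) (r r' : Fin L → Bool) : ℝ :=
  stabilizeAux p q minRule (fuel (addGrain r)) (addGrain r) r'

/-- `W` as a matrix on stable configurations. -/
noncomputable def Wmat (p q : ℝ) (L : ℕ) :
    Matrix (Fin L → Bool) (Fin L → Bool) ℝ :=
  Matrix.of fun r r' => Wker p q r r'

/-- The product Bernoulli(p) measure `ψ(r) = p^(Σ r) q^(L - Σ r)`. -/
noncomputable def psi (p q : ℝ) {L : ℕ} (r : Fin L → Bool) : ℝ :=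
  p ^ (Finset.univ.filter fun x => r x = true).card *
    q ^ (L - (Finset.univ.filter fun x => r x = true).card)



/-- Same as `stabilizeAux`, additionally recording the number of topplings performed at each
site: `stabilizeSAux p q R n s c k` is the probability that the process started from `s`
terminates within `n` steps on the stable field `c` having performed exactly `k x`
topplings (transfers of a waiting particle from `x` to `x+1`) at each site `x`. -/
noncomputable def stabilizeSAux (p q : ℝ) (R : State L → Option (Fin L)) :
    ℕ → State L → (Fin L → Bool) → (Fin L → ℕ) → ℝ
  | 0, s, c, k => if s.w = 0 ∧ s.z = c ∧ k = 0 then 1 else 0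
  | n + 1, s, c, k =>
    match R s with
    | none => if s.z = c ∧ k = 0 then 1 else 0
    | some x =>
      if s.z x then
        (if k x = 0 then 0
          else stabilizeSAux p q R n (topple s x) c (Function.update k x (k x - 1)))
      else
        p * stabilizeSAux p q R n (settle s x) c k
          + q * (if k x = 0 then 0
              else stabilizeSAux p q R n (jump s x) c (Function.update k x (k x - 1)))

/-- Joint avalanche kernel: `Kker p q r r' k` is the probability that, adding one particle
at site 1 to the stable configuration `r`, the resulting avalanche leads to the stable
configuration `r'` with exactly `k x` topplings at each site `x`. -/
noncomputable def Kker (p q : ℝ) (r r' : Fin L → Bool) (k : Fin L → ℕ) : ℝ :=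
  stabilizeSAux p q minRule (fuel (addGrain r)) (addGrain r) r' k

/-- `E[s(x,t)]`: expectation of the number of topplings at site `x` in the `t`-th avalanche
(`t ≥ 1`), for the stationary process started from `ψ`. -/
noncomputable def meanS (p q : ℝ) (L : ℕ) (t : ℕ) (x : Fin L) : ℝ :=
  ∑ r0 : Fin L → Bool, ∑ r1 : Fin L → Bool, ∑ r2 : Fin L → Bool,
    ∑' k : Fin L → ℕ,
      psi p q r0 * ((Wmat p q L) ^ (t - 1)) r0 r1 * Kker p q r1 r2 k * (k x : ℝ)

/-- `E[s(x,t) s(x',t+τ)]` (`t, τ ≥ 1`) for the stationary process started from `ψ`. -/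
noncomputable def corrS (p q : ℝ) (L : ℕ) (t τ : ℕ) (x x' : Fin L) : ℝ :=
  ∑ r0 : Fin L → Bool, ∑ r1 : Fin L → Bool, ∑ r2 : Fin L → Bool,
    ∑ r3 : Fin L → Bool, ∑ r4 : Fin L → Bool,
      ∑' k1 : Fin L → ℕ, ∑' k2 : Fin L → ℕ,
        psi p q r0 * ((Wmat p q L) ^ (t - 1)) r0 r1 *
          Kker p q r1 r2 k1 * (k1 x : ℝ) *
          ((Wmat p q L) ^ (τ - 1)) r2 r3 *
          Kker p q r3 r4 k2 * (k2 x' : ℝ)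




variable {L : ℕ}

/-! ### Basic unfolding lemmas -/

lemma stabilizeAux_zero (p q : ℝ) (R : State L → Option (Fin L)) (s : State L)
    (c : Fin L → Bool) :
    stabilizeAux p q R 0 s c = if s.w = 0 ∧ s.z = c then 1 else 0 := rfl

lemma stabilizeAux_succ_none (p q : ℝ) {R : State L → Option (Fin L)} (n : ℕ) {s : State L}
    (h : R s = none) (c : Fin L → Bool) :
    stabilizeAux p q R (n + 1) s c = if s.z = c then 1 else 0 := by
  rw [stabilizeAux, h]

lemma stabilizeAux_succ_some_true (p q : ℝ) {R : State L → Option (Fin L)} (n : ℕ)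
    {s : State L} {x : Fin L} (h : R s = some x) (hz : s.z x = true) (c : Fin L → Bool) :
    stabilizeAux p q R (n + 1) s c = stabilizeAux p q R n (topple s x) c := by
  rw [stabilizeAux, h]; simp [hz]

lemma stabilizeAux_succ_some_false (p q : ℝ) {R : State L → Option (Fin L)} (n : ℕ)
    {s : State L} {x : Fin L} (h : R s = some x) (hz : s.z x = false) (c : Fin L → Bool) :
    stabilizeAux p q R (n + 1) s c =
      p * stabilizeAux p q R n (settle s x) c + q * stabilizeAux p q R n (jump s x) c := by
  rw [stabilizeAux, h]; simp [hz]

lemma minRule_eq_none (s : State L) (h : s.w = 0) : minRule s = none := by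
  simp [minRule, h]

lemma minRule_eq_none_iff (s : State L) : minRule s = none ↔ s.w = 0 := by
  constructor
  · intro h; by_contra hw; simp [minRule, hw] at h
  · exact minRule_eq_none s

lemma minRule_some_mem {s : State L} {x : Fin L} (h : minRule s = some x) : x ∈ s.w := by
  by_cases hw : s.w = 0
  · simp [minRule, hw] at h
  · simp only [minRule, hw, dite_false, Option.some.injEq] at h
    subst h
    rw [← Multiset.mem_toFinset]
    exact Finset.min'_mem _ _

lemma minRule_some_le {s : State L} {x : Fin L} (h : minRule s = some x) :
    ∀ y ∈ s.w, x ≤ y := by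
  intro y hy
  by_cases hw : s.w = 0
  · simp [minRule, hw] at h
  · simp only [minRule, hw, dite_false, Option.some.injEq] at h
    subst h
    exact Finset.min'_le _ _ (Multiset.mem_toFinset.mpr hy)


variable {L : ℕ}

/-! ### Fuel lemmas -/

private def gwt (L : ℕ) (x : Fin L) : ℕ := L + 1 - x.val

lemma potential_gwt (s : State L) : potential s =
    (s.w.map (gwt L)).sum + ∑ x : Fin L, (if s.z x then gwt L x else 0) := rfl

lemma sum_ite_update_false {z : Fin L → Bool} {x : Fin L} (hx : z x = true) (g : Fin L → ℕ) :
    (∑ y, (if z y then g y else 0)) =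
      (∑ y, (if Function.update z x false y then g y else 0)) + g x := by
  have h1 : ∀ y : Fin L,
      (if Function.update z x false y then g y else 0) =
        Function.update (fun y => if z y then g y else 0) x 0 y := by
    intro y
    by_cases hy : y = x
    · subst hy; simp
    · simp [Function.update_of_ne hy]
  have h2 : ∀ y : Fin L,
      (if z y then g y else 0) =
        Function.update (fun y => if z y then g y else 0) x (g x) y := by
    intro y
    by_cases hy : y = x
    · subst hy; simp [hx]
    · simp [Function.update_of_ne hy]
  rw [Finset.sum_congr rfl (fun y _ => h2 y), Finset.sum_congr rfl (fun y _ => h1 y),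
    Finset.sum_update_of_mem (Finset.mem_univ x), Finset.sum_update_of_mem (Finset.mem_univ x)]
  ring

lemma sum_ite_update_true {z : Fin L → Bool} {x : Fin L} (g : Fin L → ℕ) :
    (∑ y, (if Function.update z x true y then g y else 0)) ≤
      (∑ y, (if z y then g y else 0)) + g x := by
  have h1 : ∀ y : Fin L,
      (if Function.update z x true y then g y else 0) =
        Function.update (fun y => if z y then g y else 0) x (g x) y := by
    intro y
    by_cases hy : y = x
    · subst hy; simp
    · simp [Function.update_of_ne hy]
  rw [Finset.sum_congr rfl (fun y _ => h1 y),
    Finset.sum_update_of_mem (Finset.mem_univ x)]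
  have : (∑ y ∈ Finset.univ \ {x}, (if z y then g y else 0)) ≤
      ∑ y, (if z y then g y else 0) :=
    Finset.sum_le_sum_of_subset (Finset.sdiff_subset)
  omega

lemma succSite_map_sum_le (x : Fin L) :
    ((succSite L x).map (gwt L)).sum + 1 ≤ gwt L x := by
  have hx : x.val < L := x.isLt
  unfold succSite gwt
  split
  · simp [gwt]; omega
  · simp [gwt]; omega

lemma succSite_card_le (x : Fin L) : Multiset.card (succSite L x) ≤ 1 := by
  unfold succSite; split <;> simp

lemma erase_map_sum {w : Multiset (Fin L)} {x : Fin L} (hx : x ∈ w) (g : Fin L → ℕ) :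
    (w.map g).sum = g x + ((w.erase x).map g).sum := by
  conv_lhs => rw [← Multiset.cons_erase hx]
  simp

lemma fuel_topple_lt {s : State L} {x : Fin L} (hz : s.z x = true) :
    fuel (topple s x) < fuel s := by
  have h1 := sum_ite_update_false hz (gwt L)
  have h2 := succSite_map_sum_le x
  have h3 := succSite_card_le x
  simp only [fuel, potential_gwt, topple, Multiset.map_add, Multiset.sum_add,
    Multiset.card_add] at *
  omega

lemma fuel_settle_lt {s : State L} {x : Fin L} (hx : x ∈ s.w) :
    fuel (settle s x) < fuel s := by
  have h1 := sum_ite_update_true (z := s.z) (x := x) (gwt L)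
  have h2 := erase_map_sum hx (gwt L)
  have h4 : Multiset.card s.w = Multiset.card (s.w.erase x) + 1 := by
    rw [← Multiset.cons_erase hx]; simp
  have h5 : 1 ≤ gwt L x := by unfold gwt; have := x.isLt; omega
  simp only [fuel, potential_gwt, settle] at *
  omega

lemma fuel_jump_lt {s : State L} {x : Fin L} (hx : x ∈ s.w) :
    fuel (jump s x) < fuel s := by
  have h2 := erase_map_sum hx (gwt L)
  have h3 := succSite_map_sum_le x
  have h6 := succSite_card_le x
  have h4 : Multiset.card s.w = Multiset.card (s.w.erase x) + 1 := by
    rw [← Multiset.cons_erase hx]; simp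
  simp only [fuel, potential_gwt, jump, Multiset.map_add, Multiset.sum_add,
    Multiset.card_add] at *
  omega
/-! ### Stabilized probability `Stab` -/

lemma stabilizeAux_w0 (p q : ℝ) {s : State L} (h : s.w = 0) (n : ℕ) (c : Fin L → Bool) :
    stabilizeAux p q minRule n s c = if s.z = c then 1 else 0 := by
  cases n with
  | zero => rw [stabilizeAux_zero]; simp [h]
  | succ n => exact stabilizeAux_succ_none p q n (minRule_eq_none s h) c

lemma one_le_fuel {s : State L} (h : s.w ≠ 0) : 1 ≤ fuel s := by
  have : Multiset.card s.w ≠ 0 := by simpa using h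
  unfold fuel; omega

lemma minRule_some_of_ne {s : State L} (h : s.w ≠ 0) : ∃ x, minRule s = some x := by
  cases hm : minRule s with
  | none => exact absurd ((minRule_eq_none_iff s).mp hm) h
  | some x => exact ⟨x, rfl⟩

lemma stabilizeAux_congr (p q : ℝ) :
    ∀ (N : ℕ) (s : State L), fuel s ≤ N → ∀ n m c, fuel s ≤ n → fuel s ≤ m →
      stabilizeAux p q minRule n s c = stabilizeAux p q minRule m s c := by
  intro N
  induction N with
  | zero =>
    intro s hs n m c _ _
    have hw : s.w = 0 := by
      have : Multiset.card s.w = 0 := by unfold fuel at hs; omega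
      simpa using this
    rw [stabilizeAux_w0 p q hw, stabilizeAux_w0 p q hw]
  | succ N ih =>
    intro s hs n m c hn hm
    by_cases hw : s.w = 0
    · rw [stabilizeAux_w0 p q hw, stabilizeAux_w0 p q hw]
    · obtain ⟨x, hx⟩ := minRule_some_of_ne hw
      have hxm : x ∈ s.w := minRule_some_mem hx
      have h1 : 1 ≤ fuel s := one_le_fuel hw
      obtain ⟨n', rfl⟩ : ∃ n', n = n' + 1 := ⟨n - 1, by omega⟩
      obtain ⟨m', rfl⟩ : ∃ m', m = m' + 1 := ⟨m - 1, by omega⟩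
      cases hz : s.z x with
      | true =>
        rw [stabilizeAux_succ_some_true p q n' hx hz, stabilizeAux_succ_some_true p q m' hx hz]
        have hf := fuel_topple_lt (s := s) (x := x) hz
        exact ih _ (by omega) _ _ _ (by omega) (by omega)
      | false =>
        rw [stabilizeAux_succ_some_false p q n' hx hz,
          stabilizeAux_succ_some_false p q m' hx hz]
        have hf1 := fuel_settle_lt (s := s) hxm
        have hf2 := fuel_jump_lt (s := s) hxm
        rw [ih _ (by omega : fuel (settle s x) ≤ N) _ m' _ (by omega) (by omega),
          ih _ (by omega : fuel (jump s x) ≤ N) _ m' _ (by omega) (by omega)]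

noncomputable def Stab (p q : ℝ) (s : State L) (c : Fin L → Bool) : ℝ :=
  stabilizeAux p q minRule (fuel s) s c

lemma stabilizeAux_eq_Stab (p q : ℝ) {s : State L} {n : ℕ} (hn : fuel s ≤ n)
    (c : Fin L → Bool) : stabilizeAux p q minRule n s c = Stab p q s c :=
  stabilizeAux_congr p q (fuel s) s le_rfl n (fuel s) c hn le_rfl

lemma Stab_w0 (p q : ℝ) {s : State L} (h : s.w = 0) (c : Fin L → Bool) :
    Stab p q s c = if s.z = c then 1 else 0 := stabilizeAux_w0 p q h _ c

lemma Stab_some_true (p q : ℝ) {s : State L} {x : Fin L} (hx : minRule s = some x)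
    (hz : s.z x = true) (c : Fin L → Bool) :
    Stab p q s c = Stab p q (topple s x) c := by
  have hw : s.w ≠ 0 := by
    intro h; rw [minRule_eq_none s h] at hx; exact nomatch hx
  have h1 : 1 ≤ fuel s := one_le_fuel hw
  obtain ⟨n', hn⟩ : ∃ n', fuel s = n' + 1 := ⟨fuel s - 1, by omega⟩
  have hf := fuel_topple_lt (s := s) (x := x) hz
  rw [Stab, hn, stabilizeAux_succ_some_true p q n' hx hz,
    stabilizeAux_eq_Stab p q (by omega)]

lemma Stab_some_false (p q : ℝ) {s : State L} {x : Fin L} (hx : minRule s = some x)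
    (hz : s.z x = false) (c : Fin L → Bool) :
    Stab p q s c = p * Stab p q (settle s x) c + q * Stab p q (jump s x) c := by
  have hw : s.w ≠ 0 := by
    intro h; rw [minRule_eq_none s h] at hx; exact nomatch hx
  have hxm : x ∈ s.w := minRule_some_mem hx
  have h1 : 1 ≤ fuel s := one_le_fuel hw
  obtain ⟨n', hn⟩ : ∃ n', fuel s = n' + 1 := ⟨fuel s - 1, by omega⟩
  have hf1 := fuel_settle_lt (s := s) hxm
  have hf2 := fuel_jump_lt (s := s) hxm
  rw [Stab, hn, stabilizeAux_succ_some_false p q n' hx hz,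
    stabilizeAux_eq_Stab p q (by omega), stabilizeAux_eq_Stab p q (by omega)]

lemma Stab_sum_one {p q : ℝ} (hpq : p + q = 1) (s : State L) :
    ∑ c : Fin L → Bool, Stab p q s c = 1 := by
  suffices h : ∀ (N : ℕ) (s : State L), fuel s ≤ N → ∑ c : Fin L → Bool, Stab p q s c = 1 from
    h (fuel s) s le_rfl
  intro N
  induction N with
  | zero =>
    intro s hs
    have hw : s.w = 0 := by
      have : Multiset.card s.w = 0 := by unfold fuel at hs; omega
      simpa using this
    simp [Stab_w0 p q hw, Finset.sum_ite_eq]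
  | succ N ih =>
    intro s hs
    by_cases hw : s.w = 0
    · simp [Stab_w0 p q hw, Finset.sum_ite_eq]
    · obtain ⟨x, hx⟩ := minRule_some_of_ne hw
      have hxm : x ∈ s.w := minRule_some_mem hx
      cases hz : s.z x with
      | true =>
        have hf := fuel_topple_lt (s := s) (x := x) hz
        simp only [Stab_some_true p q hx hz]
        exact ih _ (by omega)
      | false =>
        have hf1 := fuel_settle_lt (s := s) hxm
        have hf2 := fuel_jump_lt (s := s) hxm
        simp only [Stab_some_false p q hx hz]
        rw [Finset.sum_add_distrib, ← Finset.mul_sum, ← Finset.mul_sum,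
          ih _ (by omega : fuel (settle s x) ≤ N), ih _ (by omega : fuel (jump s x) ≤ N)]
        simpa using hpq
/-! ### Unfolding lemmas for `stabilizeSAux` -/

lemma stabilizeSAux_zero (p q : ℝ) (R : State L → Option (Fin L)) (s : State L)
    (c : Fin L → Bool) (k : Fin L → ℕ) :
    stabilizeSAux p q R 0 s c k = if s.w = 0 ∧ s.z = c ∧ k = 0 then 1 else 0 := rfl

lemma stabilizeSAux_succ_none (p q : ℝ) {R : State L → Option (Fin L)} (n : ℕ) {s : State L}
    (h : R s = none) (c : Fin L → Bool) (k : Fin L → ℕ) :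
    stabilizeSAux p q R (n + 1) s c k = if s.z = c ∧ k = 0 then 1 else 0 := by
  rw [stabilizeSAux, h]

lemma stabilizeSAux_succ_some_true (p q : ℝ) {R : State L → Option (Fin L)} (n : ℕ)
    {s : State L} {x : Fin L} (h : R s = some x) (hz : s.z x = true) (c : Fin L → Bool)
    (k : Fin L → ℕ) :
    stabilizeSAux p q R (n + 1) s c k =
      (if k x = 0 then 0
        else stabilizeSAux p q R n (topple s x) c (Function.update k x (k x - 1))) := by
  rw [stabilizeSAux, h]; simp [hz]

lemma stabilizeSAux_succ_some_false (p q : ℝ) {R : State L → Option (Fin L)} (n : ℕ)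
    {s : State L} {x : Fin L} (h : R s = some x) (hz : s.z x = false) (c : Fin L → Bool)
    (k : Fin L → ℕ) :
    stabilizeSAux p q R (n + 1) s c k =
      p * stabilizeSAux p q R n (settle s x) c k
        + q * (if k x = 0 then 0
            else stabilizeSAux p q R n (jump s x) c (Function.update k x (k x - 1))) := by
  rw [stabilizeSAux, h]; simp [hz]

/-! ### Counting functions -/

def cnt (x : Fin L) (z : Fin L → Bool) : ℕ := ∑ y, if y ≤ x ∧ z y = true then 1 else 0

def wcnt (x : Fin L) (w : Multiset (Fin L)) : ℕ := Multiset.card (w.filter (· ≤ x))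

lemma cnt_update (z : Fin L → Bool) (x₀ : Fin L) (b : Bool) (x : Fin L) :
    cnt x (Function.update z x₀ b) + (if x₀ ≤ x ∧ z x₀ = true then 1 else 0) =
      cnt x z + (if x₀ ≤ x ∧ b = true then 1 else 0) := by
  unfold cnt
  have h1 : ∀ y : Fin L,
      (if y ≤ x ∧ Function.update z x₀ b y = true then 1 else 0) =
        Function.update (fun y => if y ≤ x ∧ z y = true then 1 else 0) x₀
          (if x₀ ≤ x ∧ b = true then 1 else 0) y := by
    intro y
    by_cases hy : y = x₀
    · subst hy; simp
    · simp [Function.update_of_ne hy]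
  have h2 : ∀ y : Fin L,
      (if y ≤ x ∧ z y = true then 1 else 0) =
        Function.update (fun y => if y ≤ x ∧ z y = true then 1 else 0) x₀
          (if x₀ ≤ x ∧ z x₀ = true then 1 else 0) y := by
    intro y
    by_cases hy : y = x₀
    · subst hy; simp
    · simp [Function.update_of_ne hy]
  rw [Finset.sum_congr rfl (fun y _ => h1 y)]
  conv_rhs => rw [Finset.sum_congr rfl (fun y _ => h2 y)]
  rw [Finset.sum_update_of_mem (Finset.mem_univ x₀),
    Finset.sum_update_of_mem (Finset.mem_univ x₀)]
  ring

lemma wcnt_add (x : Fin L) (w w' : Multiset (Fin L)) :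
    wcnt x (w + w') = wcnt x w + wcnt x w' := by
  unfold wcnt; rw [Multiset.filter_add, Multiset.card_add]

lemma wcnt_succSite (x₀ x : Fin L) :
    wcnt x (succSite L x₀) = if x₀.val < x.val then 1 else 0 := by
  unfold wcnt succSite
  by_cases h : x₀.val + 1 < L
  · rw [dif_pos h]
    by_cases hle : (⟨x₀.val + 1, h⟩ : Fin L) ≤ x
    · have hlt : x₀.val < x.val := Nat.lt_of_succ_le (Fin.le_def.mp hle)
      rw [if_pos hlt, Multiset.filter_singleton, if_pos hle]
      simp
    · have hlt : ¬ x₀.val < x.val := fun hc => hle (Fin.le_def.mpr (Nat.succ_le_of_lt hc))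
      rw [if_neg hlt, Multiset.filter_singleton, if_neg hle]
      simp
  · have hlt : ¬ x₀.val < x.val := by have := x.isLt; omega
    rw [dif_neg h, if_neg hlt]
    simp

lemma wcnt_erase {w : Multiset (Fin L)} {x₀ : Fin L} (hx : x₀ ∈ w) (x : Fin L) :
    wcnt x w = wcnt x (w.erase x₀) + (if x₀ ≤ x then 1 else 0) := by
  conv_lhs => rw [← Multiset.cons_erase hx]
  unfold wcnt
  rw [Multiset.filter_cons]
  split <;> simp [Multiset.card_add] <;> omega

/-! ### The conservation law -/

lemma stabilizeSAux_support (p q : ℝ) :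
    ∀ (n : ℕ) (s : State L) (c : Fin L → Bool) (k : Fin L → ℕ) (x : Fin L),
      stabilizeSAux p q minRule n s c k ≠ 0 →
      k x + cnt x c = cnt x s.z + wcnt x s.w := by
  intro n
  induction n with
  | zero =>
    intro s c k x h
    rw [stabilizeSAux_zero] at h
    split at h
    · obtain ⟨hw, hz, hk⟩ := ‹_ ∧ _ ∧ _›
      subst hz; subst hk; simp [hw, wcnt]
    · exact absurd rfl h
  | succ n ih =>
    intro s c k x h
    cases hR : minRule s with
    | none =>
      rw [stabilizeSAux_succ_none p q n hR] at h
      have hw : s.w = 0 := (minRule_eq_none_iff s).mp hR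
      split at h
      · obtain ⟨hz, hk⟩ := ‹_ ∧ _›
        subst hz; subst hk; simp [hw, wcnt]
      · exact absurd rfl h
    | some x₀ =>
      have hxm : x₀ ∈ s.w := minRule_some_mem hR
      cases hz : s.z x₀ with
      | true =>
        rw [stabilizeSAux_succ_some_true p q n hR hz] at h
        split at h
        · exact absurd rfl h
        · rename_i hk0
          have hIH := ih (topple s x₀) c (Function.update k x₀ (k x₀ - 1)) x h
          have hcnt := cnt_update s.z x₀ false x
          rw [hz] at hcnt
          have hw : wcnt x (topple s x₀).w = wcnt x s.w + (if x₀.val < x.val then 1 else 0) := by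
            show wcnt x (s.w + succSite L x₀) = _
            rw [wcnt_add, wcnt_succSite]
          rw [hw] at hIH
          have hze : (topple s x₀).z = Function.update s.z x₀ false := rfl
          rw [hze] at hIH
          by_cases hxx : x = x₀
          · subst hxx
            rw [Function.update_self] at hIH
            simp at hcnt hIH
            omega
          · rw [Function.update_of_ne hxx] at hIH
            have hv : x₀.val ≠ x.val := fun hv => hxx (Fin.ext hv.symm)
            by_cases hle : x₀ ≤ x
            · have hlt : x₀.val < x.val := lt_of_le_of_ne hle hv
              simp only [hle, hlt, true_and, if_true] at hcnt hIH
              simp only [Bool.false_eq_true, and_false, if_false] at hcnt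
              omega
            · have hlt : ¬ x₀.val < x.val := fun hc => hle (le_of_lt hc)
              simp only [hle, hlt, false_and, if_false] at hcnt hIH
              omega
      | false =>
        rw [stabilizeSAux_succ_some_false p q n hR hz] at h
        have hAB : stabilizeSAux p q minRule n (settle s x₀) c k ≠ 0 ∨
            (if k x₀ = 0 then (0:ℝ)
              else stabilizeSAux p q minRule n (jump s x₀) c
                (Function.update k x₀ (k x₀ - 1))) ≠ 0 := by
          by_contra hc
          push_neg at hc
          rw [hc.1, hc.2, mul_zero, mul_zero, add_zero] at h
          exact h rfl
        rcases hAB with hA | hB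
        · have hIH := ih (settle s x₀) c k x hA
          have hcnt := cnt_update s.z x₀ true x
          rw [hz] at hcnt
          have hw : wcnt x s.w = wcnt x (s.w.erase x₀) + (if x₀ ≤ x then 1 else 0) :=
            wcnt_erase hxm x
          have hwe : (settle s x₀).w = s.w.erase x₀ := rfl
          have hze : (settle s x₀).z = Function.update s.z x₀ true := rfl
          rw [hwe, hze] at hIH
          simp only [Bool.false_eq_true, and_false, if_false, and_true] at hcnt
          by_cases hle : x₀ ≤ x <;> simp only [hle, if_true, if_false] at hcnt hIH hw <;> omega
        · split at hB
          · exact absurd rfl hB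
          · rename_i hk0
            have hIH := ih (jump s x₀) c (Function.update k x₀ (k x₀ - 1)) x hB
            have hw : wcnt x (jump s x₀).w =
                wcnt x (s.w.erase x₀) + (if x₀.val < x.val then 1 else 0) := by
              show wcnt x (s.w.erase x₀ + succSite L x₀) = _
              rw [wcnt_add, wcnt_succSite]
            have hw2 : wcnt x s.w = wcnt x (s.w.erase x₀) + (if x₀ ≤ x then 1 else 0) :=
              wcnt_erase hxm x
            have hje : (jump s x₀).z = s.z := rfl
            rw [hw, hje] at hIH
            by_cases hxx : x = x₀
            · subst hxx
              rw [Function.update_self] at hIH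
              simp only [lt_self_iff_false, if_false, le_refl, if_true] at hIH hw2
              omega
            · rw [Function.update_of_ne hxx] at hIH
              have hv : x₀.val ≠ x.val := fun hv => hxx (Fin.ext hv.symm)
              by_cases hle : x₀ ≤ x
              · have hlt : x₀.val < x.val := lt_of_le_of_ne hle hv
                simp only [hle, hlt, if_true] at hIH hw2
                omega
              · have hlt : ¬ x₀.val < x.val := fun hc => hle (le_of_lt hc)
                simp only [hle, hlt, if_false] at hIH hw2
                omega
/-! ### Summing `stabilizeSAux` over `k` -/

lemma shift_hasSum {x : Fin L} {F : (Fin L → ℕ) → ℝ} {T : ℝ} (hF : HasSum F T) :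
    HasSum (fun k : Fin L → ℕ => if k x = 0 then 0 else F (Function.update k x (k x - 1))) T := by
  set φ : (Fin L → ℕ) → (Fin L → ℕ) := fun k => Function.update k x (k x + 1) with hφ
  have hinj : Function.Injective φ := by
    intro k k' h
    funext y
    by_cases hy : y = x
    · subst hy
      have := congrFun h y
      simp only [φ, Function.update_self] at this
      omega
    · have := congrFun h y
      simpa [φ, Function.update_of_ne hy] using this
  have h0 : ∀ k ∉ Set.range φ,
      (if k x = 0 then (0:ℝ) else F (Function.update k x (k x - 1))) = 0 := by
    intro k hk
    rw [if_pos]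
    by_contra hkx
    apply hk
    refine ⟨Function.update k x (k x - 1), ?_⟩
    funext y
    by_cases hy : y = x
    · subst hy; simp only [φ, Function.update_self]; omega
    · simp [φ, Function.update_of_ne hy]
  have hcomp : (fun k : Fin L → ℕ =>
      if k x = 0 then (0:ℝ) else F (Function.update k x (k x - 1))) ∘ φ = F := by
    funext k
    simp only [Function.comp_apply, φ, Function.update_self, Nat.add_sub_cancel,
      Nat.succ_ne_zero, if_false, Function.update_idem]
    rw [Function.update_eq_self]
  exact (hinj.hasSum_iff h0).mp (by rw [hcomp]; exact hF)

lemma hasSum_stabilizeSAux (p q : ℝ) :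
    ∀ (n : ℕ) (s : State L) (c : Fin L → Bool),
      HasSum (stabilizeSAux p q minRule n s c) (stabilizeAux p q minRule n s c) := by
  intro n
  induction n with
  | zero =>
    intro s c
    have he : stabilizeSAux p q minRule 0 s c = fun k : Fin L → ℕ =>
        if k = 0 then (if s.w = 0 ∧ s.z = c then (1:ℝ) else 0) else 0 := by
      funext k
      rw [stabilizeSAux_zero]
      by_cases hk : k = 0 <;> by_cases hc : s.w = 0 ∧ s.z = c <;>
        simp [hk, hc] <;> tauto
    rw [he, stabilizeAux_zero]
    exact hasSum_ite_eq 0 _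
  | succ n ih =>
    intro s c
    cases hR : minRule s with
    | none =>
      have he : stabilizeSAux p q minRule (n+1) s c = fun k : Fin L → ℕ =>
          if k = 0 then (if s.z = c then (1:ℝ) else 0) else 0 := by
        funext k
        rw [stabilizeSAux_succ_none p q n hR]
        by_cases hk : k = 0 <;> by_cases hc : s.z = c <;> simp [hk, hc]
      rw [he, stabilizeAux_succ_none p q n hR]
      exact hasSum_ite_eq 0 _
    | some x =>
      cases hz : s.z x with
      | true =>
        have he : stabilizeSAux p q minRule (n+1) s c = fun k : Fin L → ℕ =>
            if k x = 0 then 0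
              else stabilizeSAux p q minRule n (topple s x) c (Function.update k x (k x - 1)) :=
          funext fun k => stabilizeSAux_succ_some_true p q n hR hz c k
        rw [he, stabilizeAux_succ_some_true p q n hR hz]
        exact shift_hasSum (ih (topple s x) c)
      | false =>
        have he : stabilizeSAux p q minRule (n+1) s c = fun k : Fin L → ℕ =>
            p * stabilizeSAux p q minRule n (settle s x) c k
              + q * (if k x = 0 then 0
                  else stabilizeSAux p q minRule n (jump s x) c
                    (Function.update k x (k x - 1))) :=
          funext fun k => stabilizeSAux_succ_some_false p q n hR hz c k
        rw [he, stabilizeAux_succ_some_false p q n hR hz]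
        exact ((ih (settle s x) c).mul_left p).add ((shift_hasSum (ih (jump s x) c)).mul_left q)

lemma hasSum_Kker (p q : ℝ) (r r' : Fin L → Bool) :
    HasSum (Kker p q r r') (Wker p q r r') :=
  hasSum_stabilizeSAux p q _ _ _

lemma Kker_support {p q : ℝ} (hL : 0 < L) {r r' : Fin L → Bool} {k : Fin L → ℕ}
    (h : Kker p q r r' k ≠ 0) (x : Fin L) :
    k x + cnt x r' = cnt x r + 1 := by
  have hs := stabilizeSAux_support p q _ _ _ _ x h
  have hz : (addGrain r : State L).z = r := rfl
  have hw : wcnt x (addGrain r : State L).w = 1 := by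
    show wcnt x (if h : 0 < L then ({⟨0, h⟩} : Multiset (Fin L)) else 0) = 1
    rw [dif_pos hL]
    unfold wcnt
    rw [Multiset.filter_singleton, if_pos]
    · simp
    · exact Fin.le_def.mpr (Nat.zero_le _)
  rw [hz, hw] at hs
  exact hs

lemma tsum_Kker_mul {p q : ℝ} (hL : 0 < L) (r r' : Fin L → Bool) (x : Fin L) :
    ∑' k : Fin L → ℕ, Kker p q r r' k * (k x : ℝ) =
      Wker p q r r' * (1 + (cnt x r : ℝ) - (cnt x r' : ℝ)) := by
  have hpt : ∀ k : Fin L → ℕ,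
      Kker p q r r' k * (k x : ℝ) =
        Kker p q r r' k * (1 + (cnt x r : ℝ) - (cnt x r' : ℝ)) := by
    intro k
    by_cases h : Kker p q r r' k = 0
    · rw [h, zero_mul, zero_mul]
    · have hs := Kker_support hL h x
      congr 1
      have : (k x : ℝ) + (cnt x r' : ℝ) = (cnt x r : ℝ) + 1 := by
        exact_mod_cast congrArg (fun n : ℕ => (n : ℝ)) hs
      linarith
  rw [tsum_congr hpt, tsum_mul_right, (hasSum_Kker p q r r').tsum_eq]
/-! ### Averaging machinery -/

noncomputable def mu (p q : ℝ) (b : Bool) : ℝ := if b then p else q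

noncomputable def wt (p q : ℝ) (m : Fin L) (z : Fin L → Bool) (y : Fin L) (b : Bool) : ℝ :=
  if y ≤ m then (if b = z y then 1 else 0) else mu p q b

def patch (m : Fin L) (z f : Fin L → Bool) : Fin L → Bool :=
  fun y => if y ≤ m then z y else f y

def wms (m : Fin L) (j e : ℕ) : Multiset (Fin L) :=
  Multiset.replicate j m + e • succSite L m

lemma patch_apply_self (m : Fin L) (z f : Fin L → Bool) : patch m z f m = z m := by
  simp [patch]

lemma patch_update (m : Fin L) (z f : Fin L → Bool) (b : Bool) :
    Function.update (patch m z f) m b = patch m (Function.update z m b) f := by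
  funext y
  by_cases hy : y = m
  · subst hy; simp [patch]
  · rw [Function.update_of_ne hy]
    by_cases hle : y ≤ m <;> simp [patch, hle, Function.update_of_ne hy]

lemma patch_update_indep (m : Fin L) (z f : Fin L → Bool) (b : Bool) :
    patch m z (Function.update f m b) = patch m z f := by
  funext y
  by_cases hle : y ≤ m
  · simp [patch, hle]
  · have hy : y ≠ m := fun h => hle (h ▸ le_refl m)
    simp [patch, hle, Function.update_of_ne hy]

lemma mem_succSite {m y : Fin L} (h : y ∈ succSite L m) :
    ∃ hm : m.val + 1 < L, y = ⟨m.val + 1, hm⟩ := by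
  unfold succSite at h
  by_cases hm : m.val + 1 < L
  · rw [dif_pos hm] at h
    exact ⟨hm, by simpa using h⟩
  · rw [dif_neg hm] at h
    simp at h

lemma mem_wms {m y : Fin L} {j e : ℕ} (h : y ∈ wms m j e) : m ≤ y := by
  unfold wms at h
  rcases Multiset.mem_add.mp h with h | h
  · rw [Multiset.eq_of_mem_replicate h]
  · rcases Multiset.mem_nsmul.mp h with ⟨-, h⟩
    obtain ⟨hm, rfl⟩ := mem_succSite h
    have : (⟨m.val + 1, hm⟩ : Fin L).val = m.val + 1 := rfl
    exact Fin.le_def.mpr (by omega)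

lemma mem_wms_self {m : Fin L} {j e : ℕ} (hj : 1 ≤ j) : m ∈ wms m j e :=
  Multiset.mem_add.mpr (Or.inl (Multiset.mem_replicate.mpr ⟨by omega, rfl⟩))

lemma minRule_wms {m : Fin L} {j e : ℕ} (hj : 1 ≤ j) (z : Fin L → Bool) :
    minRule (⟨z, wms m j e⟩ : State L) = some m := by
  have hmem : m ∈ wms m j e := mem_wms_self hj
  have hne : wms m j e ≠ 0 := fun h => by simp [h] at hmem
  simp only [minRule, hne, dite_false, Option.some.injEq]
  apply le_antisymm
  · exact Finset.min'_le _ _ (Multiset.mem_toFinset.mpr hmem)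
  · exact Finset.le_min' _ _ _ fun y hy => mem_wms (Multiset.mem_toFinset.mp hy)

lemma wms_succ_erase (m : Fin L) (j e : ℕ) :
    (wms m (j + 1) e).erase m = wms m j e := by
  unfold wms
  rw [Multiset.replicate_succ, Multiset.cons_add, Multiset.erase_cons_head]

lemma wms_add_succSite (m : Fin L) (j e : ℕ) :
    wms m j e + succSite L m = wms m j (e + 1) := by
  unfold wms
  rw [add_assoc, ← succ_nsmul]

lemma wms_zero_zero (m : Fin L) : wms m 0 0 = 0 := by
  simp [wms]

lemma wms_zero_last {m : Fin L} (h : ¬ m.val + 1 < L) (e : ℕ) : wms m 0 e = 0 := by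
  simp [wms, succSite, h]

lemma wms_zero_next {m : Fin L} (h : m.val + 1 < L) (e : ℕ) :
    wms m 0 e = wms ⟨m.val + 1, h⟩ e 0 := by
  simp only [wms, succSite, dif_pos h, Multiset.replicate_zero, zero_add,
    zero_nsmul, add_zero]
  rw [Multiset.nsmul_singleton]

/-- changing the fixed value of `z` at `m` does not change the averaged sum, provided the
functional does not depend on `f m`. -/
lemma sum_wt_indep (p q : ℝ) (m : Fin L) (z : Fin L → Bool) (b : Bool)
    (G : (Fin L → Bool) → ℝ) (hG : ∀ f b', G (Function.update f m b') = G f) :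
    ∑ f : Fin L → Bool, (∏ y, wt p q m z y (f y)) * G f
      = ∑ f : Fin L → Bool, (∏ y, wt p q m (Function.update z m b) y (f y)) * G f := by
  have hinv : Function.Involutive
      (fun f : Fin L → Bool => Function.update f m (xor (f m) (xor (z m) b))) := by
    intro f
    funext y
    by_cases hy : y = m
    · subst hy
      simp only [Function.update_self]
      cases f y <;> cases z y <;> cases b <;> rfl
    · simp [Function.update_of_ne hy]
  apply Fintype.sum_equiv (Function.Involutive.toPerm _ hinv)
  intro f
  have hσ : Function.Involutive.toPerm _ hinv f
      = Function.update f m (xor (f m) (xor (z m) b)) := rfl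
  rw [hσ, hG]
  congr 1
  apply Finset.prod_congr rfl
  intro y _
  by_cases hy : y = m
  · subst hy
    simp only [Function.update_self, wt, le_refl, if_true]
    cases f y <;> cases z y <;> cases b <;> simp
  · rw [Function.update_of_ne hy, wt, wt, Function.update_of_ne hy]

/-- Evaluation of the averaged indicator of reaching configuration `c`. -/
lemma eval_sum (p q : ℝ) (m : Fin L) (z c : Fin L → Bool) :
    ∑ f : Fin L → Bool, (∏ y, wt p q m z y (f y)) * (if patch m z f = c then (1:ℝ) else 0)
      = (if ∀ y, y ≤ m → c y = z y then 1 else 0) *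
          ∏ y ∈ Finset.univ.filter (fun y => ¬ y ≤ m), mu p q (c y) := by
  have hsummand : ∀ f : Fin L → Bool,
      (∏ y, wt p q m z y (f y)) * (if patch m z f = c then (1:ℝ) else 0)
        = ∏ y, (wt p q m z y (f y) *
            (if (if y ≤ m then z y else f y) = c y then (1:ℝ) else 0)) := by
    intro f
    rw [Finset.prod_mul_distrib]
    congr 1
    by_cases h : patch m z f = c
    · rw [if_pos h]
      symm
      apply Finset.prod_eq_one
      intro y _
      have hy := congrFun h y
      simp only [patch] at hy
      rw [if_pos hy]
    · rw [if_neg h]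
      symm
      have hex : ∃ y, ¬ (if y ≤ m then z y else f y) = c y := by
        by_contra hc
        push_neg at hc
        exact h (funext fun y => hc y)
      obtain ⟨y, hy⟩ := hex
      exact Finset.prod_eq_zero (Finset.mem_univ y) (if_neg hy)
  rw [Finset.sum_congr rfl fun f _ => hsummand f]
  have hps := Finset.prod_univ_sum (t := fun _ : Fin L => (Finset.univ : Finset Bool))
    (f := fun (y : Fin L) (b : Bool) =>
      wt p q m z y b * (if (if y ≤ m then z y else b) = c y then (1:ℝ) else 0))
  rw [← Fintype.piFinset_univ, ← hps]
  have hcoord : ∀ y : Fin L,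
      (∑ b : Bool, wt p q m z y b * (if (if y ≤ m then z y else b) = c y then (1:ℝ) else 0))
        = if y ≤ m then (if c y = z y then (1:ℝ) else 0) else mu p q (c y) := by
    intro y
    rw [Fintype.sum_bool]
    by_cases hy : y ≤ m
    · simp only [wt, hy, if_true]
      cases hz : z y <;> cases hc : c y <;> simp
    · simp only [wt, hy, if_false]
      cases hc : c y <;> simp [mu]
  rw [Finset.prod_congr rfl fun y _ => hcoord y, Finset.prod_ite, Finset.prod_boole]
  refine congrArg₂ (· * ·) ?_ rfl
  refine ite_congr ?_ (fun _ => rfl) (fun _ => rfl)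
  rw [eq_iff_iff]
  simp

/-- Splitting off the weight of coordinate `m+1`. -/
lemma wt_trans {p q : ℝ} {m : Fin L} (hm1 : m.val + 1 < L) (z f : Fin L → Bool) :
    (∏ y, wt p q m z y (f y))
      = ∑ b : Bool, mu p q b *
          ∏ y, wt p q ⟨m.val + 1, hm1⟩
            (Function.update z ⟨m.val + 1, hm1⟩ b) y (f y) := by
  set m' : Fin L := ⟨m.val + 1, hm1⟩ with hm'
  have hm'nle : ¬ m' ≤ m := by rw [Fin.le_def]; simp [hm']
  have hyle : ∀ y : Fin L, y ≠ m' → (y ≤ m' ↔ y ≤ m) := by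
    intro y hy
    have : y.val ≠ m'.val := fun h => hy (Fin.ext h)
    rw [Fin.le_def, Fin.le_def]
    simp only [hm'] at this ⊢
    omega
  have hsplit : ∀ (w : Fin L → Bool → ℝ),
      (∏ y, w y (f y)) = w m' (f m') * ∏ y ∈ Finset.univ.erase m', w y (f y) := by
    intro w
    exact (Finset.mul_prod_erase Finset.univ (fun y => w y (f y))
      (Finset.mem_univ m')).symm
  have hrest : ∀ b : Bool, (∏ y ∈ Finset.univ.erase m',
      wt p q m' (Function.update z m' b) y (f y)) = ∏ y ∈ Finset.univ.erase m',
        wt p q m z y (f y) := by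
    intro b
    apply Finset.prod_congr rfl
    intro y hy
    have hyne : y ≠ m' := (Finset.mem_erase.mp hy).1
    unfold wt
    rw [Function.update_of_ne hyne]
    exact if_congr (hyle y hyne) rfl rfl
  have hfac : ∀ b : Bool, wt p q m' (Function.update z m' b) m' (f m')
      = if f m' = b then (1:ℝ) else 0 := by
    intro b
    unfold wt
    rw [if_pos (le_refl m'), Function.update_self]
  rw [hsplit (wt p q m z)]
  rw [Fintype.sum_bool]
  rw [hsplit (wt p q m' (Function.update z m' true)),
    hsplit (wt p q m' (Function.update z m' false))]
  rw [hrest, hrest, hfac, hfac]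
  have hm'wt : wt p q m z m' (f m') = mu p q (f m') := by
    unfold wt; rw [if_neg hm'nle]
  rw [hm'wt]
  cases f m' <;> simp [mu]

lemma prod_split_m (p q : ℝ) (m : Fin L) (c : Fin L → Bool) :
    (∏ y ∈ Finset.univ.filter (fun y => m ≤ y), mu p q (c y))
      = mu p q (c m) * ∏ y ∈ Finset.univ.filter (fun y => ¬ y ≤ m), mu p q (c y) := by
  have hset : Finset.univ.filter (fun y : Fin L => m ≤ y)
      = insert m (Finset.univ.filter (fun y => ¬ y ≤ m)) := by
    ext y
    simp only [Finset.mem_filter, Finset.mem_univ, true_and, Finset.mem_insert]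
    constructor
    · intro h
      rcases eq_or_lt_of_le h with h | h
      · exact Or.inl h.symm
      · exact Or.inr (not_le_of_gt h)
    · rintro (rfl | h)
      · exact le_refl _
      · exact le_of_not_ge h
  rw [hset, Finset.prod_insert (by simp)]
lemma patch_succ {m : Fin L} (hm1 : m.val + 1 < L) (z f : Fin L → Bool) (b : Bool)
    (hf : f ⟨m.val + 1, hm1⟩ = b) :
    patch m z f = patch ⟨m.val + 1, hm1⟩ (Function.update z ⟨m.val + 1, hm1⟩ b) f := by
  funext y
  unfold patch
  by_cases hy : y = (⟨m.val + 1, hm1⟩ : Fin L)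
  · have h1 : ¬ y ≤ m := by subst hy; rw [Fin.le_def]; simp
    have h2 : y ≤ (⟨m.val + 1, hm1⟩ : Fin L) := by subst hy; exact le_refl _
    rw [if_neg h1, if_pos h2, hy, Function.update_self, hf]
  · have hvy : y.val ≠ m.val + 1 := fun h => hy (Fin.ext h)
    have h2 : (y ≤ (⟨m.val + 1, hm1⟩ : Fin L)) ↔ y ≤ m := by
      rw [Fin.le_def, Fin.le_def]
      simp only [Fin.val_mk]
      omega
    by_cases hle : y ≤ m
    · rw [if_pos hle, if_pos (h2.mpr hle), Function.update_of_ne hy]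
    · rw [if_neg hle, if_neg (fun h => hle (h2.mp h))]

lemma bracket_lt_congr {m : Fin L} (c z : Fin L → Bool) (b : Bool) :
    (if ∀ y, y < m → c y = Function.update z m b y then (1:ℝ) else 0)
      = if ∀ y, y < m → c y = z y then (1:ℝ) else 0 := by
  refine ite_congr ?_ (fun _ => rfl) (fun _ => rfl)
  rw [eq_iff_iff]
  constructor <;> intro h y hy <;>
    have hne : y ≠ m := ne_of_lt hy
  · have := h y hy; rwa [Function.update_of_ne hne] at this
  · rw [Function.update_of_ne hne]; exact h y hy

/-- The key induction: averaging the sites `> m` over Bernoulli, an avalanche of `j ≥ 1`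
particles at `m` (plus `e` already emitted to `m+1`) produces a Bernoulli product on the
sites `≥ m` and leaves the sites `< m` unchanged. -/
lemma claim {p q : ℝ} (hpq : p + q = 1) :
    ∀ (d : ℕ) (m : Fin L), L - m.val ≤ d →
    ∀ (J j e : ℕ) (z c : Fin L → Bool), 2 * j + (if z m then 1 else 0) ≤ J → 1 ≤ j →
    (∑ f : Fin L → Bool, (∏ y, wt p q m z y (f y)) *
        Stab p q ⟨patch m z f, wms m j e⟩ c)
      = (if ∀ y, y < m → c y = z y then 1 else 0) *
          ∏ y ∈ Finset.univ.filter (fun y => m ≤ y), mu p q (c y) := by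
  intro d
  induction d with
  | zero =>
    intro m hm
    exact absurd hm (by have := m.isLt; omega)
  | succ d ihd =>
    intro m hm J
    induction J with
    | zero =>
      intro j e z c hJ hj
      exact absurd hJ (by omega)
    | succ J ihJ =>
      intro j e z c hJ hj
      obtain ⟨j', rfl⟩ : ∃ j', j = j' + 1 := ⟨j - 1, by omega⟩
      have hmin : ∀ g : Fin L → Bool, minRule (⟨g, wms m (j' + 1) e⟩ : State L) = some m :=
        fun g => minRule_wms (by omega) g
      -- the transition to the next site, used when the last particle at `m` is consumed
      have hNEXT : ∀ (e' : ℕ) (z' : Fin L → Bool),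
          (∑ f : Fin L → Bool, (∏ y, wt p q m z' y (f y)) *
              Stab p q ⟨patch m z' f, wms m 0 e'⟩ c)
            = (if ∀ y, y ≤ m → c y = z' y then 1 else 0) *
                ∏ y ∈ Finset.univ.filter (fun y => ¬ y ≤ m), mu p q (c y) := by
        intro e' z'
        by_cases hm1 : m.val + 1 < L
        · cases e' with
          | zero =>
            rw [Finset.sum_congr rfl fun f _ => by
              rw [wms_zero_zero, Stab_w0 p q rfl c]]
            exact eval_sum p q m z' c
          | succ e'' =>
            set m' : Fin L := ⟨m.val + 1, hm1⟩ with hm'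
            have hm'v : m'.val = m.val + 1 := rfl
            have hstep : ∀ f : Fin L → Bool,
                (∏ y, wt p q m z' y (f y)) *
                    Stab p q ⟨patch m z' f, wms m 0 (e'' + 1)⟩ c
                  = ∑ b : Bool, mu p q b *
                      ((∏ y, wt p q m' (Function.update z' m' b) y (f y)) *
                        Stab p q ⟨patch m' (Function.update z' m' b) f,
                          wms m' (e'' + 1) 0⟩ c) := by
              intro f
              rw [wms_zero_next hm1, wt_trans hm1 z' f, Finset.sum_mul]
              apply Finset.sum_congr rfl
              intro b _
              rw [mul_assoc]
              congr 1
              by_cases hfb : f m' = b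
              · rw [patch_succ hm1 z' f b hfb]
              · have hz0 : wt p q m' (Function.update z' m' b) m' (f m') = 0 := by
                  unfold wt
                  rw [if_pos (le_refl m'), Function.update_self, if_neg hfb]
                rw [Finset.prod_eq_zero (Finset.mem_univ m') hz0, zero_mul, zero_mul]
            rw [Finset.sum_congr rfl fun f _ => hstep f, Finset.sum_comm]
            have hinner : ∀ b : Bool,
                (∑ f : Fin L → Bool, mu p q b *
                    ((∏ y, wt p q m' (Function.update z' m' b) y (f y)) *
                      Stab p q ⟨patch m' (Function.update z' m' b) f, wms m' (e'' + 1) 0⟩ c))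
                  = mu p q b * ((if ∀ y, y ≤ m → c y = z' y then 1 else 0) *
                      ∏ y ∈ Finset.univ.filter (fun y => ¬ y ≤ m), mu p q (c y)) := by
              intro b
              rw [← Finset.mul_sum,
                ihd m' (by omega) (2 * (e'' + 1) + 1) (e'' + 1) 0
                  (Function.update z' m' b) c (by split <;> omega) (by omega)]
              congr 2
              · refine ite_congr ?_ (fun _ => rfl) (fun _ => rfl)
                rw [eq_iff_iff]
                constructor
                · intro h y hy
                  have hlt : y < m' := by rw [Fin.lt_def, hm'v]; exact Nat.lt_succ_of_le hy
                  have hne : y ≠ m' := ne_of_lt hlt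
                  have := h y hlt
                  rwa [Function.update_of_ne hne] at this
                · intro h y hy
                  have hle : y ≤ m := by
                    rw [Fin.lt_def, hm'v] at hy
                    exact Fin.le_def.mpr (by omega)
                  have hne : y ≠ m' := ne_of_lt hy
                  rw [Function.update_of_ne hne]
                  exact h y hle
              · apply Finset.prod_congr _ (fun _ _ => rfl)
                apply Finset.filter_congr
                intro y _
                rw [Fin.le_def, Fin.le_def, hm'v]
                omega
            rw [Finset.sum_congr rfl fun b _ => hinner b, Fintype.sum_bool]
            have hmt : mu p q true = p := rfl
            have hmf : mu p q false = q := rfl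
            rw [hmt, hmf, ← add_mul, hpq, one_mul]
        · rw [Finset.sum_congr rfl fun f _ => by
            rw [wms_zero_last hm1, Stab_w0 p q rfl c]]
          exact eval_sum p q m z' c
      -- main case split on the value of `z` at `m`
      cases hzm : z m with
      | true =>
        have hstep : ∀ f : Fin L → Bool,
            Stab p q ⟨patch m z f, wms m (j' + 1) e⟩ c
              = Stab p q ⟨patch m (Function.update z m false) f, wms m (j' + 1) (e + 1)⟩ c := by
          intro f
          have hz : (⟨patch m z f, wms m (j' + 1) e⟩ : State L).z m = true := by
            show patch m z f m = true
            rw [patch_apply_self, hzm]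
          rw [Stab_some_true p q (hmin (patch m z f)) hz c]
          show Stab p q ⟨Function.update (patch m z f) m false,
            wms m (j' + 1) e + succSite L m⟩ c = _
          rw [patch_update, wms_add_succSite]
        rw [Finset.sum_congr rfl fun f _ => by rw [hstep f]]
        have hG1 : ∀ (f : Fin L → Bool) (b' : Bool),
            Stab p q ⟨patch m (Function.update z m false) (Function.update f m b'),
                wms m (j' + 1) (e + 1)⟩ c
              = Stab p q ⟨patch m (Function.update z m false) f, wms m (j' + 1) (e + 1)⟩ c := by
          intro f b'
          rw [patch_update_indep]
        rw [sum_wt_indep p q m z false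
          (fun f => Stab p q ⟨patch m (Function.update z m false) f, wms m (j' + 1) (e + 1)⟩ c)
          (fun f b' => hG1 f b')]
        have hif0 : (if false = true then (1:ℕ) else 0) = 0 := rfl
        have hif1 : (if true = true then (1:ℕ) else 0) = 1 := rfl
        rw [ihJ (j' + 1) (e + 1) (Function.update z m false) c
          (by rw [Function.update_self, hif0]; rw [hzm, hif1] at hJ; omega) (by omega)]
        rw [bracket_lt_congr]
      | false =>
        have hstep : ∀ f : Fin L → Bool,
            (∏ y, wt p q m z y (f y)) * Stab p q ⟨patch m z f, wms m (j' + 1) e⟩ c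
              = p * ((∏ y, wt p q m z y (f y)) *
                    Stab p q ⟨patch m (Function.update z m true) f, wms m j' e⟩ c)
                + q * ((∏ y, wt p q m z y (f y)) *
                    Stab p q ⟨patch m z f, wms m j' (e + 1)⟩ c) := by
          intro f
          have hz : (⟨patch m z f, wms m (j' + 1) e⟩ : State L).z m = false := by
            show patch m z f m = false
            rw [patch_apply_self, hzm]
          rw [Stab_some_false p q (hmin (patch m z f)) hz c]
          have hs1 : settle (⟨patch m z f, wms m (j' + 1) e⟩ : State L) m
              = ⟨patch m (Function.update z m true) f, wms m j' e⟩ := by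
            show (⟨Function.update (patch m z f) m true, (wms m (j' + 1) e).erase m⟩ : State L) = _
            rw [patch_update, wms_succ_erase]
          have hs2 : jump (⟨patch m z f, wms m (j' + 1) e⟩ : State L) m
              = ⟨patch m z f, wms m j' (e + 1)⟩ := by
            show (⟨patch m z f, (wms m (j' + 1) e).erase m + succSite L m⟩ : State L) = _
            rw [wms_succ_erase, wms_add_succSite]
          rw [hs1, hs2]
          ring
        rw [Finset.sum_congr rfl fun f _ => hstep f, Finset.sum_add_distrib,
          ← Finset.mul_sum, ← Finset.mul_sum]
        have hG1 : ∀ (f : Fin L → Bool) (b' : Bool),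
            Stab p q ⟨patch m (Function.update z m true) (Function.update f m b'), wms m j' e⟩ c
              = Stab p q ⟨patch m (Function.update z m true) f, wms m j' e⟩ c := by
          intro f b'
          rw [patch_update_indep]
        rw [sum_wt_indep p q m z true
          (fun f => Stab p q ⟨patch m (Function.update z m true) f, wms m j' e⟩ c)
          (fun f b' => hG1 f b')]
        cases j' with
        | succ j'' =>
          have hif0 : (if false = true then (1:ℕ) else 0) = 0 := rfl
          have hif1 : (if true = true then (1:ℕ) else 0) = 1 := rfl
          rw [ihJ (j'' + 1) e (Function.update z m true) c
            (by rw [Function.update_self, hif1]; rw [hzm, hif0] at hJ; omega) (by omega)]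
          rw [ihJ (j'' + 1) (e + 1) z c
            (by rw [hzm, hif0]; rw [hzm, hif0] at hJ; omega) (by omega)]
          rw [bracket_lt_congr, ← add_mul, hpq, one_mul]
        | zero =>
          rw [hNEXT e (Function.update z m true), hNEXT (e + 1) z]
          have hA : ∀ (z' : Fin L → Bool),
              (if ∀ y, y ≤ m → c y = z' y then (1:ℝ) else 0)
                = (if ∀ y, y < m → c y = z' y then (1:ℝ) else 0) *
                    (if c m = z' m then (1:ℝ) else 0) := by
            intro z'
            by_cases h1 : ∀ y, y < m → c y = z' y
            · by_cases h2 : c m = z' m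
              · rw [if_pos h1, if_pos h2, if_pos, one_mul]
                intro y hy
                rcases eq_or_lt_of_le hy with h | h
                · rwa [h]
                · exact h1 y h
              · rw [if_pos h1, if_neg h2, one_mul, if_neg]
                intro h
                exact h2 (h m (le_refl m))
            · rw [if_neg h1, zero_mul, if_neg]
              intro h
              exact h1 fun y hy => h y (le_of_lt hy)
          rw [hA, hA, bracket_lt_congr, Function.update_self]
          rw [prod_split_m p q m c]
          cases hcm : c m with
          | true =>
            have : mu p q true = p := rfl
            rw [hzm, this]
            simp only [if_pos rfl]
            have hne : ¬ (true = false) := by decide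
            rw [if_neg hne]
            simp
          | false =>
            have : mu p q false = q := rfl
            rw [hzm, this]
            have hne : ¬ (false = true) := by decide
            rw [if_neg hne, if_pos rfl]
            simp
/-! ### Stationarity of `psi` -/

lemma psi_eq_prod (p q : ℝ) (r : Fin L → Bool) : psi p q r = ∏ y, mu p q (r y) := by
  unfold psi mu
  rw [Finset.prod_ite, Finset.prod_const, Finset.prod_const]
  have hcard := Finset.card_filter_add_card_filter_not
    (s := (Finset.univ : Finset (Fin L))) (p := fun y => r y = true)
  rw [Finset.card_univ, Fintype.card_fin] at hcard
  have h2 : (Finset.univ.filter (fun y : Fin L => ¬ r y = true)).card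
      = L - (Finset.univ.filter (fun y : Fin L => r y = true)).card := by omega
  rw [h2]

lemma psi_sum_one {p q : ℝ} (hpq : p + q = 1) :
    ∑ c : Fin L → Bool, psi p q c = 1 := by
  rw [Finset.sum_congr rfl fun c _ => psi_eq_prod p q c]
  have hps := Finset.prod_univ_sum (t := fun _ : Fin L => (Finset.univ : Finset Bool))
    (f := fun (_ : Fin L) (b : Bool) => mu p q b)
  rw [← Fintype.piFinset_univ, ← hps]
  have : ∀ y : Fin L, (∑ b : Bool, mu p q b) = 1 := by
    intro y
    rw [Fintype.sum_bool]
    show p + q = 1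
    exact hpq
  rw [Finset.prod_congr rfl fun y _ => this y]
  exact Finset.prod_const_one

lemma Wker_eq_Stab (p q : ℝ) (hL : 0 < L) (r c : Fin L → Bool) :
    Wker p q r c = Stab p q ⟨r, wms ⟨0, hL⟩ 1 0⟩ c := by
  have haddw : (addGrain r : State L).w = wms ⟨0, hL⟩ 1 0 := by
    show (if h : 0 < L then ({⟨0, h⟩} : Multiset (Fin L)) else 0) = _
    rw [dif_pos hL]
    unfold wms
    rw [Multiset.replicate_one, zero_nsmul, add_zero]
  have : (addGrain r : State L) = ⟨r, wms ⟨0, hL⟩ 1 0⟩ := by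
    show (⟨r, (addGrain r : State L).w⟩ : State L) = _
    rw [haddw]
  unfold Wker Stab
  rw [this]

lemma fin_zero_le (hL : 0 < L) (y : Fin L) : (⟨0, hL⟩ : Fin L) ≤ y :=
  Fin.le_def.mpr (Nat.zero_le _)

lemma fin_le_zero_iff (hL : 0 < L) (y : Fin L) : y ≤ (⟨0, hL⟩ : Fin L) ↔ y = ⟨0, hL⟩ := by
  rw [Fin.le_def, Fin.ext_iff]
  have h0 : (⟨0, hL⟩ : Fin L).val = 0 := rfl
  omega

lemma claim_at_zero {p q : ℝ} (hpq : p + q = 1) (hL : 0 < L) (z c : Fin L → Bool) :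
    (∑ f : Fin L → Bool, (∏ y, wt p q ⟨0, hL⟩ z y (f y)) *
        Stab p q ⟨patch ⟨0, hL⟩ z f, wms ⟨0, hL⟩ 1 0⟩ c)
      = psi p q c := by
  rw [claim hpq L ⟨0, hL⟩ (by omega) 3 1 0 z c (by split <;> omega) le_rfl]
  rw [if_pos]
  · rw [one_mul, psi_eq_prod]
    apply Finset.prod_congr _ (fun _ _ => rfl)
    apply Finset.filter_true_of_mem
    intro y _
    exact fin_zero_le hL y
  · intro y hy
    have h0 : (⟨0, hL⟩ : Fin L).val = 0 := rfl
    exact absurd (Fin.lt_def.mp hy) (by omega)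

lemma psi_Wker {p q : ℝ} (hpq : p + q = 1) (hL : 0 < L) (c : Fin L → Bool) :
    ∑ r : Fin L → Bool, psi p q r * Wker p q r c = psi p q c := by
  set m0 : Fin L := ⟨0, hL⟩ with hm0
  have hkey : ∀ f : Fin L → Bool,
      psi p q f * Stab p q ⟨f, wms m0 1 0⟩ c
        = ∑ b : Bool, mu p q b * ((∏ y, wt p q m0 (fun _ => b) y (f y)) *
            Stab p q ⟨patch m0 (fun _ => b) f, wms m0 1 0⟩ c) := by
    intro f
    have hzero : ∀ b : Bool, f m0 ≠ b →
        (∏ y, wt p q m0 (fun _ => b) y (f y)) = 0 := by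
      intro b hb
      apply Finset.prod_eq_zero (Finset.mem_univ m0)
      unfold wt
      rw [if_pos (le_refl m0), if_neg hb]
    have hsame : (∏ y, wt p q m0 (fun _ => f m0) y (f y))
        = ∏ y ∈ Finset.univ.filter (fun y => ¬ y ≤ m0), mu p q (f y) := by
      have h1 : ∀ y : Fin L, wt p q m0 (fun _ => f m0) y (f y)
          = if y ≤ m0 then 1 else mu p q (f y) := by
        intro y
        unfold wt
        by_cases hy : y ≤ m0
        · rw [if_pos hy, if_pos hy]
          have : y = m0 := (fin_le_zero_iff hL y).mp hy
          rw [this, if_pos rfl]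
        · rw [if_neg hy, if_neg hy]
      rw [Finset.prod_congr rfl fun y _ => h1 y, Finset.prod_ite, Finset.prod_const_one,
        one_mul]
    have hpatch : patch m0 (fun _ => f m0) f = f := by
      funext y
      unfold patch
      by_cases hy : y ≤ m0
      · rw [if_pos hy]
        have : y = m0 := (fin_le_zero_iff hL y).mp hy
        rw [this]
      · rw [if_neg hy]
    have hpsi : psi p q f = mu p q (f m0) *
        ∏ y ∈ Finset.univ.filter (fun y => ¬ y ≤ m0), mu p q (f y) := by
      rw [psi_eq_prod, ← prod_split_m p q m0 f]
      apply Finset.prod_congr _ (fun _ _ => rfl)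
      symm
      apply Finset.filter_true_of_mem
      intro y _
      exact fin_zero_le hL y
    rw [Fintype.sum_bool]
    cases hf : f m0 with
    | true =>
      rw [hzero false (by rw [hf]; decide), zero_mul, mul_zero, add_zero]
      rw [← hf, hsame, hpatch, hpsi]
      ring
    | false =>
      rw [hzero true (by rw [hf]; decide), zero_mul, mul_zero, zero_add]
      rw [← hf, hsame, hpatch, hpsi]
      ring
  rw [Finset.sum_congr rfl fun r _ => by rw [Wker_eq_Stab p q hL, hkey r]]
  rw [Finset.sum_comm]
  have hinner : ∀ b : Bool,
      (∑ f : Fin L → Bool, mu p q b * ((∏ y, wt p q m0 (fun _ => b) y (f y)) *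
          Stab p q ⟨patch m0 (fun _ => b) f, wms m0 1 0⟩ c))
        = mu p q b * psi p q c := by
    intro b
    rw [← Finset.mul_sum, claim_at_zero hpq hL (fun _ => b) c]
  rw [Finset.sum_congr rfl fun b _ => hinner b, Fintype.sum_bool]
  show p * psi p q c + q * psi p q c = psi p q c
  rw [← add_mul, hpq, one_mul]

lemma psi_Wpow {p q : ℝ} (hpq : p + q = 1) (hL : 0 < L) (n : ℕ) (c : Fin L → Bool) :
    ∑ r : Fin L → Bool, psi p q r * ((Wmat p q L) ^ n) r c = psi p q c := by
  induction n generalizing c with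
  | zero =>
    rw [pow_zero]
    rw [Finset.sum_congr rfl fun r _ => by rw [Matrix.one_apply]]
    simp
  | succ n ih =>
    rw [pow_succ]
    rw [Finset.sum_congr rfl fun r _ => by
      rw [Matrix.mul_apply, Finset.mul_sum, Finset.sum_congr rfl fun u _ => by rw [← mul_assoc]]]
    rw [Finset.sum_comm]
    rw [Finset.sum_congr rfl fun u _ => by rw [← Finset.sum_mul, ih u]]
    exact psi_Wker hpq hL c

lemma Wker_sum_one {p q : ℝ} (hpq : p + q = 1) (r : Fin L → Bool) :
    ∑ c : Fin L → Bool, Wker p q r c = 1 := by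
  have : ∀ c, Wker p q r c = Stab p q (addGrain r) c := fun c => rfl
  rw [Finset.sum_congr rfl fun c _ => this c]
  exact Stab_sum_one hpq _
lemma meanS_eq_one {L : ℕ} (hL : 0 < L) {p q : ℝ} (hpq : p + q = 1)
    (x : Fin L) (t : ℕ) : meanS p q L t x = 1 := by
  have htsum : ∀ r0 r1 r2 : Fin L → Bool,
      (∑' k : Fin L → ℕ,
          psi p q r0 * ((Wmat p q L) ^ (t - 1)) r0 r1 * Kker p q r1 r2 k * (k x : ℝ))
        = (psi p q r0 * ((Wmat p q L) ^ (t - 1)) r0 r1) *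
            (Wker p q r1 r2 * (1 + (cnt x r1 : ℝ) - (cnt x r2 : ℝ))) := by
    intro r0 r1 r2
    have hpt : ∀ k : Fin L → ℕ,
        psi p q r0 * ((Wmat p q L) ^ (t - 1)) r0 r1 * Kker p q r1 r2 k * (k x : ℝ)
          = (psi p q r0 * ((Wmat p q L) ^ (t - 1)) r0 r1) *
              (Kker p q r1 r2 k * (k x : ℝ)) := fun k => by ring
    rw [tsum_congr hpt, tsum_mul_left, tsum_Kker_mul hL r1 r2 x]
  have h1 : meanS p q L t x
      = ∑ r1 : Fin L → Bool, psi p q r1 *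
          ∑ r2 : Fin L → Bool, Wker p q r1 r2 * (1 + (cnt x r1 : ℝ) - (cnt x r2 : ℝ)) := by
    unfold meanS
    rw [Finset.sum_congr rfl fun r0 _ => Finset.sum_congr rfl fun r1 _ =>
      Finset.sum_congr rfl fun r2 _ => htsum r0 r1 r2]
    rw [Finset.sum_congr rfl fun r0 _ => Finset.sum_congr rfl fun r1 _ =>
      (Finset.mul_sum Finset.univ
        (fun r2 => Wker p q r1 r2 * (1 + (cnt x r1 : ℝ) - (cnt x r2 : ℝ)))
        (psi p q r0 * ((Wmat p q L) ^ (t - 1)) r0 r1)).symm]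
    rw [Finset.sum_comm]
    apply Finset.sum_congr rfl
    intro r1 _
    rw [← Finset.sum_mul, psi_Wpow hpq hL (t - 1) r1]
  have h2 : ∀ r1 : Fin L → Bool,
      (∑ r2 : Fin L → Bool, Wker p q r1 r2 * (1 + (cnt x r1 : ℝ) - (cnt x r2 : ℝ)))
        = (1 + (cnt x r1 : ℝ)) - ∑ r2 : Fin L → Bool, Wker p q r1 r2 * (cnt x r2 : ℝ) := by
    intro r1
    rw [Finset.sum_congr rfl fun r2 _ =>
      (by ring : Wker p q r1 r2 * (1 + (cnt x r1 : ℝ) - (cnt x r2 : ℝ))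
        = Wker p q r1 r2 * (1 + (cnt x r1 : ℝ)) - Wker p q r1 r2 * (cnt x r2 : ℝ))]
    rw [Finset.sum_sub_distrib, ← Finset.sum_mul, Wker_sum_one hpq r1, one_mul]
  have h3 : (∑ r1 : Fin L → Bool, psi p q r1 *
        ∑ r2 : Fin L → Bool, Wker p q r1 r2 * (cnt x r2 : ℝ))
      = ∑ r2 : Fin L → Bool, psi p q r2 * (cnt x r2 : ℝ) := by
    rw [Finset.sum_congr rfl fun r1 _ => Finset.mul_sum Finset.univ
      (fun r2 => Wker p q r1 r2 * (cnt x r2 : ℝ)) (psi p q r1)]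
    rw [Finset.sum_comm]
    apply Finset.sum_congr rfl
    intro r2 _
    rw [Finset.sum_congr rfl fun r1 _ =>
      (by ring : psi p q r1 * (Wker p q r1 r2 * (cnt x r2 : ℝ))
        = (psi p q r1 * Wker p q r1 r2) * (cnt x r2 : ℝ))]
    rw [← Finset.sum_mul, psi_Wker hpq hL r2]
  have h4 : (∑ r1 : Fin L → Bool, psi p q r1 * (1 + (cnt x r1 : ℝ)))
      = 1 + ∑ r1 : Fin L → Bool, psi p q r1 * (cnt x r1 : ℝ) := by
    rw [Finset.sum_congr rfl fun r1 _ =>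
      (by ring : psi p q r1 * (1 + (cnt x r1 : ℝ))
        = psi p q r1 + psi p q r1 * (cnt x r1 : ℝ))]
    rw [Finset.sum_add_distrib, psi_sum_one hpq]
  rw [h1, Finset.sum_congr rfl fun r1 _ => by rw [h2 r1, mul_sub]]
  rw [Finset.sum_sub_distrib, h3]
  have h5 : (∑ r1 : Fin L → Bool, psi p q r1 * (1 + (cnt x r1 : ℝ)) -
      ∑ r2 : Fin L → Bool, psi p q r2 * (cnt x r2 : ℝ)) = 1 := by
    rw [h4]; ring
  exact h5

/-- in the stationary process the expected number of topplings at each site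
per avalanche equals one: `E[s(x,t)] = 1` for every site `x` and every `t ≥ 1`. -/
theorem mean_topplings_equals_one
    (L : ℕ) (hL : 0 < L) (p q : ℝ) (hp : 0 < p) (hq : 0 < q) (hpq : p + q = 1)
    (x : Fin L) (t : ℕ) (ht : 1 ≤ t) :
    meanS p q L t x = 1 := meanS_eq_one hL hpq x t

end DSS
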